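/- Let g : ℝ × ℝ → ℝ be defined by g(x,y) = x − y + 1/2 (with ℝ carrying the usual topology). Then the set A = (0, ∞) is g-closed (every sequence in A that g-converges to a point x ∈ ℝ has x ∈ A; indeed any such limit x satisfies x ≥ 1/2), although A is not closed in ℝ with respect to the usual topology. -/
import Mathlib


open Filter Topology

/-- A sequence `x` `g`-converges to `p` if `|g (x n) p| → 0`. -/
def GConv {X : Type*} (g : X → X → ℝ) (x : ℕ → X) (p : X) : Prop :=
  Tendsto (fun n => |g (x n) p|) atTop (𝓝 0)

/-- A subset `S` is `g`-closed if every sequence in `S` which `g`-converges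
to a point has its limit in `S`. -/
def GClosed {X : Type*} (g : X → X → ℝ) (S : Set X) : Prop :=
  ∀ x : ℕ → X, (∀ n, x n ∈ S) → ∀ p : X, GConv g x p → p ∈ S

/-- `g(x,y) = x - y + 1/2` on `ℝ × ℝ`. -/
noncomputable def g11 : ℝ → ℝ → ℝ := fun x y => x - y + 1 / 2

lemma key11 : ∀ x : ℕ → ℝ, (∀ n, x n ∈ Set.Ioi (0 : ℝ)) →
    ∀ p : ℝ, GConv g11 x p → (1 / 2 ≤ p ∧ p ∈ Set.Ioi (0 : ℝ)) := by
  intro x hx p hconv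
  have h1 : Tendsto (fun n => x n - (p - 1/2)) atTop (𝓝 0) := by
    have heq : (fun n => |x n - (p - 1/2)|) = fun n => |g11 (x n) p| := by
      funext n; congr 1; simp [g11]; ring
    refine (tendsto_zero_iff_abs_tendsto_zero (l := atTop) _).2 ?_
    have : (abs ∘ fun n => x n - (p - 1/2)) = fun n => |g11 (x n) p| := heq
    rw [this]; exact hconv
  have h2 : Tendsto x atTop (𝓝 (p - 1/2)) := by
    have h := h1.add (tendsto_const_nhds (x := p - 1/2) (f := atTop))
    simp only [zero_add, sub_add_cancel] at h
    exact h
  have h3 : (0:ℝ) ≤ p - 1/2 :=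
    ge_of_tendsto' h2 (fun n => le_of_lt (hx n))
  constructor
  · linarith
  · simp only [Set.mem_Ioi]; linarith

theorem stmt_11 :
    (∀ x : ℕ → ℝ, (∀ n, x n ∈ Set.Ioi (0 : ℝ)) →
      ∀ p : ℝ, GConv g11 x p → (1 / 2 ≤ p ∧ p ∈ Set.Ioi (0 : ℝ))) ∧
    GClosed g11 (Set.Ioi (0 : ℝ)) ∧
    ¬ IsClosed (Set.Ioi (0 : ℝ)) := by
  refine ⟨key11, fun x hx p h => (key11 x hx p h).2, ?_⟩
  intro h
  have : (0:ℝ) ∈ Set.Ioi (0:ℝ) := by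
    have := h.closure_eq
    rw [← this]
    refine mem_closure_of_tendsto (f := fun n : ℕ => (1:ℝ)/(n+1))
      tendsto_one_div_add_atTop_nhds_zero_nat ?_
    filter_upwards with n
    exact Set.mem_Ioi.mpr (by positivity)
  simp at this
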